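/- Let d ≥ r ≥ 1 be integers, let U, Û ∈ ℝ^{d×r} each have orthonormal columns (columns of Û denoted û₁,…,û_r), let S ∈ ℝ^{r×r} be symmetric positive semidefinite with smallest eigenvalue λ_min(S), and let 0 ≤ m < r. Then Σ_{j=m+1}^{r} û_jᵀ U S Uᵀ û_j ≥ (r − m)·λ_min(S)·(1 − ‖ÛÛᵀ − UUᵀ‖₂²). -/

import Mathlib

open Matrix

/-- The spectral norm (largest singular value) of a real matrix, i.e. the operator
norm of the associated linear map between Euclidean spaces. -/
noncomputable def specNorm {m n : Type*} [Fintype m] [Fintype n] [DecidableEq n]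
    (A : Matrix m n ℝ) : ℝ :=
  ‖LinearMap.toContinuousLinearMap (Matrix.toEuclideanLin A)‖

/-- The smallest eigenvalue of a real symmetric (Hermitian) matrix. -/
noncomputable def lambdaMin {n : Type*} [Fintype n] [DecidableEq n]
    {A : Matrix n n ℝ} (hA : A.IsHermitian) : ℝ :=
  sInf (Set.range hA.eigenvalues)

lemma lambdaMin_le {n : Type*} [Fintype n] [DecidableEq n]
    {A : Matrix n n ℝ} (hA : A.IsHermitian) (i : n) : lambdaMin hA ≤ hA.eigenvalues i :=
  csInf_le (Set.finite_range _).bddBelow ⟨i, rfl⟩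

lemma lambdaMin_nonneg {n : Type*} [Fintype n] [DecidableEq n] [Nonempty n]
    {A : Matrix n n ℝ} (hA : A.PosSemidef) : 0 ≤ lambdaMin hA.isHermitian :=
  le_csInf (Set.range_nonempty _) (by rintro x ⟨i, rfl⟩; exact hA.eigenvalues_nonneg i)

lemma sub_smul_posSemidef {n : Type*} [Fintype n] [DecidableEq n]
    {A : Matrix n n ℝ} (hA : A.IsHermitian) : (A - lambdaMin hA • 1).PosSemidef := by
  nth_rewrite 1 [hA.spectral_theorem]
  have h1 : (lambdaMin hA • 1 : Matrix n n ℝ) =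
      (hA.eigenvectorUnitary : Matrix n n ℝ) * (lambdaMin hA • 1) *
        star (hA.eigenvectorUnitary : Matrix n n ℝ) := by
    rw [Matrix.mul_smul, smul_mul_assoc, mul_one,
      (Matrix.mem_unitaryGroup_iff).mp hA.eigenvectorUnitary.2]
  rw [h1, Unitary.conjStarAlgAut_apply, ← sub_mul, ← mul_sub]
  have h2 : (diagonal (RCLike.ofReal ∘ hA.eigenvalues) - lambdaMin hA • (1 : Matrix n n ℝ)) =
      diagonal (fun i => hA.eigenvalues i - lambdaMin hA) := by
    rw [← diagonal_one, ← diagonal_smul, diagonal_sub]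
    ext i k; by_cases h : i = k <;> simp [diagonal, h]
  rw [h2]
  exact (posSemidef_diagonal_iff.mpr fun i =>
    sub_nonneg.mpr (lambdaMin_le hA i)).mul_mul_conjTranspose_same _

lemma quad_ge {n : Type*} [Fintype n] [DecidableEq n]
    {A : Matrix n n ℝ} (hA : A.IsHermitian) (x : n → ℝ) :
    lambdaMin hA * (x ⬝ᵥ x) ≤ x ⬝ᵥ A *ᵥ x := by
  have h := (sub_smul_posSemidef hA).dotProduct_mulVec_nonneg x
  simp only [RCLike.re_to_real, star_trivial, sub_mulVec, dotProduct_sub, smul_mulVec,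
    one_mulVec, dotProduct_smul, smul_eq_mul] at h
  linarith

lemma mulVec_dot {m n : Type*} [Fintype m] [Fintype n] (M : Matrix m n ℝ)
    (v : n → ℝ) (w : m → ℝ) : (M *ᵥ v) ⬝ᵥ w = v ⬝ᵥ (Mᵀ *ᵥ w) := by
  rw [dotProduct_comm, dotProduct_mulVec, ← mulVec_transpose, dotProduct_comm]

lemma single_dot_mulVec {q : Type*} [Fintype q] [DecidableEq q] (M : Matrix q q ℝ) (j : q) :
    Pi.single j 1 ⬝ᵥ M *ᵥ Pi.single j 1 = M j j := by
  simp [dotProduct, mulVec, Pi.single_apply]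

lemma inner_eq_dot {n : Type*} [Fintype n] (v w : n → ℝ) :
    (inner ℝ ((WithLp.equiv 2 (n → ℝ)).symm v) ((WithLp.equiv 2 (n → ℝ)).symm w) : ℝ)
      = v ⬝ᵥ w := by
  simp [PiLp.inner_apply, dotProduct, RCLike.inner_apply, mul_comm]

theorem stmt4 (d r : ℕ) (hr : 1 ≤ r) (hd : r ≤ d) (m : ℕ) (hm : m < r)
    (U Uhat : Matrix (Fin d) (Fin r) ℝ)
    (hU : Uᵀ * U = 1) (hUhat : Uhatᵀ * Uhat = 1)
    (S : Matrix (Fin r) (Fin r) ℝ) (hS : S.PosSemidef) :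
    ((r : ℝ) - (m : ℝ)) * lambdaMin hS.isHermitian *
        (1 - specNorm (Uhat * Uhatᵀ - U * Uᵀ) ^ 2) ≤
      ∑ j ∈ Finset.univ.filter (fun j : Fin r => m ≤ (j : ℕ)),
        (Uhatᵀ * U * S * Uᵀ * Uhat) j j := by
  classical
  haveI : Nonempty (Fin r) := ⟨⟨0, hr⟩⟩
  set lam := lambdaMin hS.isHermitian with hlam
  set E := Uhat * Uhatᵀ - U * Uᵀ with hEdef
  set s := specNorm E with hsdef
  have hlam0 : 0 ≤ lam := lambdaMin_nonneg hS
  -- per term bound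
  have key : ∀ j : Fin r,
      lam * (1 - s ^ 2) ≤ (Uhatᵀ * U * S * Uᵀ * Uhat) j j := by
    intro j
    set u : Fin d → ℝ := Uhat *ᵥ Pi.single j 1 with hu
    set x : Fin r → ℝ := Uᵀ *ᵥ u with hx
    have huu : u ⬝ᵥ u = 1 := by
      rw [hu, mulVec_dot, mulVec_mulVec, hUhat, one_mulVec]
      simp [dotProduct, Pi.single_apply]
    -- E *ᵥ u = u - U *ᵥ x
    have hQ : (Uhat * Uhatᵀ) *ᵥ u = u := by
      rw [hu, mulVec_mulVec, Matrix.mul_assoc, hUhat, Matrix.mul_one]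
    have hP : (U * Uᵀ) *ᵥ u = U *ᵥ x := by
      rw [hx]; exact (mulVec_mulVec ..).symm
    have hE : E *ᵥ u = u - U *ᵥ x := by
      rw [hEdef, sub_mulVec, hQ, hP]
    have hux : u ⬝ᵥ (U *ᵥ x) = x ⬝ᵥ x := by
      rw [dotProduct_comm, mulVec_dot, ← hx]
    have hUxUx : (U *ᵥ x) ⬝ᵥ (U *ᵥ x) = x ⬝ᵥ x := by
      rw [mulVec_dot, mulVec_mulVec, hU, one_mulVec]
    -- norm bound
    have hEu : (E *ᵥ u) ⬝ᵥ (E *ᵥ u) ≤ s ^ 2 := by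
      set u' : EuclideanSpace ℝ (Fin d) := (WithLp.equiv 2 (Fin d → ℝ)).symm u with hu'
      have happ : Matrix.toEuclideanLin E u' = (WithLp.equiv 2 (Fin d → ℝ)).symm (E *ᵥ u) :=
        Matrix.toEuclideanLin_apply_piLp_toLp E u
      have hle : ‖Matrix.toEuclideanLin E u'‖ ≤ s * ‖u'‖ :=
        (LinearMap.toContinuousLinearMap (Matrix.toEuclideanLin E)).le_opNorm u'
      have hnu : ‖u'‖ ^ 2 = 1 := by
        rw [← real_inner_self_eq_norm_sq, hu', inner_eq_dot, huu]
      have h1 : (E *ᵥ u) ⬝ᵥ (E *ᵥ u) = ‖Matrix.toEuclideanLin E u'‖ ^ 2 := by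
        rw [← real_inner_self_eq_norm_sq, happ, inner_eq_dot]
      have hs0 : (0:ℝ) ≤ s := norm_nonneg _
      have h2 : ‖Matrix.toEuclideanLin E u'‖ ^ 2 ≤ (s * ‖u'‖) ^ 2 := by
        apply pow_le_pow_left₀ (norm_nonneg _) hle
      rw [h1]
      calc ‖Matrix.toEuclideanLin E u'‖ ^ 2 ≤ (s * ‖u'‖) ^ 2 := h2
        _ = s ^ 2 * ‖u'‖ ^ 2 := by ring
        _ = s ^ 2 := by rw [hnu, mul_one]
    have hxx : 1 - s ^ 2 ≤ x ⬝ᵥ x := by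
      have hexp : (E *ᵥ u) ⬝ᵥ (E *ᵥ u) = 1 - x ⬝ᵥ x := by
        rw [hE]
        simp only [sub_dotProduct, dotProduct_sub, huu, hux, hUxUx]
        rw [dotProduct_comm (U *ᵥ x) u, hux]
        ring
      linarith [hEu, hexp ▸ hEu]
    -- quadratic form
    have hx' : x = (Uᵀ * Uhat) *ᵥ Pi.single j 1 := by rw [hx, hu, mulVec_mulVec]
    have hterm : (Uhatᵀ * U * S * Uᵀ * Uhat) j j = x ⬝ᵥ S *ᵥ x := by
      rw [hx', mulVec_dot, mulVec_mulVec, mulVec_mulVec, single_dot_mulVec,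
        transpose_mul, transpose_transpose]
      congr 1
      simp only [Matrix.mul_assoc]
    rw [hterm]
    calc lam * (1 - s ^ 2) ≤ lam * (x ⬝ᵥ x) := by
          exact mul_le_mul_of_nonneg_left hxx hlam0
      _ ≤ x ⬝ᵥ S *ᵥ x := quad_ge hS.isHermitian x
  -- sum up
  have hfilt : Finset.univ.filter (fun j : Fin r => m ≤ (j : ℕ))
      = Finset.Ici (⟨m, hm⟩ : Fin r) := by
    ext j; simp [Fin.le_def]
  have hcard : (Finset.univ.filter (fun j : Fin r => m ≤ (j : ℕ))).card = r - m := by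
    rw [hfilt, Fin.card_Ici]
  have hsum := Finset.card_nsmul_le_sum
    (Finset.univ.filter (fun j : Fin r => m ≤ (j : ℕ)))
    (fun j => (Uhatᵀ * U * S * Uᵀ * Uhat) j j) (lam * (1 - s ^ 2))
    (fun j _ => key j)
  rw [hcard, nsmul_eq_mul] at hsum
  calc ((r : ℝ) - (m : ℝ)) * lam * (1 - s ^ 2)
      = ((r - m : ℕ) : ℝ) * (lam * (1 - s ^ 2)) := by
        rw [Nat.cast_sub hm.le]; ring
    _ ≤ _ := hsum
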